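/- If a two-way transducer T has a run ρ on input w in which some position x is visited twice in the same state q, then there is another accepting run on a (possibly shorter) input obtained by deleting the segment of the run between the two visits; iterating this yields a normalized run (visiting each state at most once per position) whose visiting sequences at each position have length at most |Q|, so the number of distinct visiting sequences is at most Σ_{i=1}^{|Q|} (2|Q|)^i. -/

import Mathlib

/-- A two-way finite automaton (the underlying automaton of a two-way transducer):
`step q s q' d` means that from state `q` reading symbol `s` (a letter `Sum.inr a`, the
left endmarker `Sum.inl false`, or the right endmarker `Sum.inl true`) the machine may
move to state `q'` in direction `d` (`true` = right, `false` = left). -/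
structure TwoNFA (A : Type*) where
  Q : Type*
  start : Set Q
  accept : Set Q
  step : Q → Bool ⊕ A → Q → Bool → Prop

/-- The symbol at position `i` of `⊢ w ⊣` (position 0 is `⊢`, position `|w|+1` is `⊣`). -/
def symAt {A : Type*} (w : List A) (i : ℕ) : Bool ⊕ A :=
  if i = 0 then Sum.inl false
  else if h : i - 1 < w.length then Sum.inr (w.get ⟨i - 1, h⟩) else Sum.inl true

/-- One step between configurations (state, position). -/
def StepOk {A : Type*} (M : TwoNFA A) (w : List A) (c c' : M.Q × ℕ) : Prop :=
  c.2 ≤ w.length + 1 ∧ c'.2 ≤ w.length + 1 ∧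
    ∃ d : Bool, M.step c.1 (symAt w c.2) c'.1 d ∧
      (if d then c'.2 = c.2 + 1 else 1 ≤ c.2 ∧ c'.2 = c.2 - 1)

/-- An accepting run on `⊢ w ⊣`: starts in an initial state on `⊢` and ends in an
accepting state on `⊣`. -/
def IsAccRun {A : Type*} (M : TwoNFA A) (w : List A) (ρ : List (M.Q × ℕ)) : Prop :=
  ρ.Chain' (StepOk M w) ∧
    (∃ q ∈ M.start, ρ.head? = some (q, 0)) ∧
    (∃ q ∈ M.accept, ρ.getLast? = some (q, w.length + 1))

/-- The visiting sequence of the run `ρ` at position `x`: the ordered list of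
(state, direction of outgoing transition) pairs of the visits of `ρ` to `x`. -/
def visitSeq {Q : Type*} (ρ : List (Q × ℕ)) (x : ℕ) : List (Q × Bool) :=
  ((ρ.zip ρ.tail).filter (fun p => p.1.2 == x)).map
    (fun p => (p.1.1, decide (p.1.2 < p.2.2)))

/-- (1) If an accepting run visits the same configuration (state, position) twice,
deleting the segment between the two visits yields a strictly shorter accepting run;
(2) iterating this yields a normalized (duplicate-free) accepting run; (3) the visiting
sequences of a normalized run have length at most `|Q|`, so the number of distinct
(nonempty) visiting sequences is at most `∑_{i=1}^{|Q|} (2|Q|)^i`. -/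
lemma my_shrink {A : Type*} (M : TwoNFA A) (w : List A) (ρ : List (M.Q × ℕ))
    (hρ : IsAccRun M w ρ) (hn : ¬ ρ.Nodup) :
    ∃ ρ' : List (M.Q × ℕ), IsAccRun M w ρ' ∧ ρ'.length < ρ.length := by
  rw [List.nodup_iff_getElem?_ne_getElem?] at hn
  push_neg at hn
  obtain ⟨i, j, hij, hj, heq⟩ := hn
  obtain ⟨hc, ⟨q0, hq0, hhead⟩, ⟨qf, hqf, hlast⟩⟩ := hρ
  set n := ρ.length with hn'
  have ltake : (ρ.take (i+1)).length = i + 1 := by rw [List.length_take]; omega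
  have ldrop : (ρ.drop (j+1)).length = n - (j+1) := by rw [List.length_drop]
  refine ⟨ρ.take (i+1) ++ ρ.drop (j+1), ⟨?_, ⟨q0, hq0, ?_⟩, ⟨qf, hqf, ?_⟩⟩, ?_⟩
  · change List.IsChain _ _; change List.IsChain _ ρ at hc
    rw [List.isChain_append]
    refine ⟨hc.take _, hc.drop _, ?_⟩
    intro x hx y hy
    rw [List.head?_eq_getElem?, List.getElem?_drop, Nat.add_zero, Option.mem_def,
      List.getElem?_eq_some_iff] at hy
    obtain ⟨hj1lt, hyval⟩ := hy
    rw [List.getLast?_eq_getElem?, ltake, Nat.add_sub_cancel, List.getElem?_take,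
      if_pos (Nat.lt_succ_self i), Option.mem_def, heq, List.getElem?_eq_some_iff] at hx
    obtain ⟨hjlt, hxval⟩ := hx
    rw [← hxval, ← hyval]
    rw [List.isChain_iff_getElem] at hc
    have := hc j (by omega)
    simpa using this
  · rw [List.head?_eq_getElem?, List.getElem?_append, if_pos (by rw [ltake]; omega),
      List.getElem?_take, if_pos (by omega), ← List.head?_eq_getElem?]
    exact hhead
  · have key : (ρ.take (i+1) ++ ρ.drop (j+1)).getLast? = ρ.getLast? := by
      rw [List.getLast?_eq_getElem?, List.getLast?_eq_getElem?, List.length_append,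
        ltake, ldrop, List.getElem?_append, ltake]
      by_cases hj1 : j + 1 < n
      · rw [if_neg (by omega), List.getElem?_drop]
        congr 1
        omega
      · rw [if_pos (by omega), List.getElem?_take, if_pos (by omega)]
        have h1 : i + 1 + (n - (j+1)) - 1 = i := by omega
        rw [h1, heq]
        congr 1
        omega
    rw [key]
    exact hlast
  · rw [List.length_append, ltake, ldrop]
    omega

lemma my_exists_nodup {A : Type*} (M : TwoNFA A) (w : List A) :
    ∀ (k : ℕ) (ρ : List (M.Q × ℕ)), ρ.length ≤ k → IsAccRun M w ρ →
      ∃ ρ' : List (M.Q × ℕ), IsAccRun M w ρ' ∧ ρ'.Nodup := by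
  intro k
  induction k with
  | zero =>
    intro ρ hl h
    have : ρ = [] := List.length_eq_zero_iff.mp (Nat.le_zero.mp hl)
    exact ⟨ρ, h, this ▸ List.nodup_nil⟩
  | succ k ih =>
    intro ρ hl h
    by_cases hnd : ρ.Nodup
    · exact ⟨ρ, h, hnd⟩
    · obtain ⟨ρ₂, h2, hlt⟩ := my_shrink M w ρ h hnd
      exact ih ρ₂ (by omega) h2

lemma my_prefix_map_fst_zip {α : Type*} : ∀ l : List α, ((l.zip l.tail).map Prod.fst) <+: l
  | [] => by simp
  | [a] => by simp
  | a :: b :: t => by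
    rw [List.tail_cons, List.zip_cons_cons, List.map_cons]
    exact (List.cons_prefix_cons).mpr ⟨rfl, my_prefix_map_fst_zip (b :: t)⟩

lemma my_visitSeq_len {Q : Type*} [Fintype Q] (ρ : List (Q × ℕ)) (hnd : ρ.Nodup) (x : ℕ) :
    (visitSeq ρ x).length ≤ Fintype.card Q := by
  classical
  set L := (ρ.zip ρ.tail).filter (fun p => p.1.2 == x) with hL
  have h1 : (L.map Prod.fst).Sublist ρ :=
    (List.filter_sublist.map Prod.fst).trans (my_prefix_map_fst_zip ρ).sublist
  have h2 : (L.map Prod.fst).Nodup := hnd.sublist h1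
  have key : ∀ a ∈ L.map Prod.fst, a.2 = x := by
    intro a ha
    obtain ⟨p, hp, rfl⟩ := List.mem_map.mp ha
    have := List.of_mem_filter hp
    simpa using this
  have h3 : ((L.map Prod.fst).map Prod.fst).Nodup := by
    apply h2.map_on
    intro a ha b hb hab
    exact Prod.ext hab (by rw [key a ha, key b hb])
  have h4 := h3.length_le_card
  simpa [visitSeq, ← hL] using h4

lemma my_ncard_bound {Q : Type*} [Fintype Q] (ρ : List (Q × ℕ))
    (hlen : ∀ x, (visitSeq ρ x).length ≤ Fintype.card Q) :
    {s : List (Q × Bool) | s ≠ [] ∧ ∃ x, visitSeq ρ x = s}.ncard ≤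
      ∑ i ∈ Finset.Icc 1 (Fintype.card Q), (2 * Fintype.card Q) ^ i := by
  classical
  set n := Fintype.card Q with hn
  set F : ℕ → Finset (List (Q × Bool)) :=
    fun i => (Finset.univ : Finset (List.Vector (Q × Bool) i)).image List.Vector.toList
      with hF
  set T := (Finset.Icc 1 n).biUnion F with hT
  have hsub : {s : List (Q × Bool) | s ≠ [] ∧ ∃ x, visitSeq ρ x = s} ⊆ ↑T := by
    rintro s ⟨hne, x, rfl⟩
    refine Finset.mem_coe.mpr (Finset.mem_biUnion.mpr ⟨(visitSeq ρ x).length, ?_, ?_⟩)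
    · rw [Finset.mem_Icc]
      exact ⟨List.length_pos_iff.mpr hne, hlen x⟩
    · rw [hF]
      exact Finset.mem_image.mpr ⟨⟨visitSeq ρ x, rfl⟩, Finset.mem_univ _, rfl⟩
  calc {s : List (Q × Bool) | s ≠ [] ∧ ∃ x, visitSeq ρ x = s}.ncard
      ≤ (↑T : Set (List (Q × Bool))).ncard := Set.ncard_le_ncard hsub T.finite_toSet
    _ = T.card := Set.ncard_coe_finset T
    _ ≤ ∑ i ∈ Finset.Icc 1 n, (F i).card := Finset.card_biUnion_le
    _ ≤ ∑ i ∈ Finset.Icc 1 n, (2 * n) ^ i := by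
        refine Finset.sum_le_sum fun i _ => ?_
        calc (F i).card ≤ Fintype.card (List.Vector (Q × Bool) i) :=
              Finset.card_image_le.trans (le_of_eq Finset.card_univ)
          _ = (2 * n) ^ i := by
              rw [card_vector]
              congr 1
              rw [Fintype.card_prod, Fintype.card_bool, mul_comm]

theorem two_way_normalized_run {A : Type*} (M : TwoNFA A) [Fintype M.Q]
    (w : List A) (ρ : List (M.Q × ℕ)) (hρ : IsAccRun M w ρ) :
    (¬ ρ.Nodup → ∃ ρ' : List (M.Q × ℕ), IsAccRun M w ρ' ∧ ρ'.length < ρ.length) ∧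
    (∃ ρ' : List (M.Q × ℕ), IsAccRun M w ρ' ∧ ρ'.Nodup) ∧
    (∀ ρ' : List (M.Q × ℕ), IsAccRun M w ρ' → ρ'.Nodup →
      (∀ x : ℕ, (visitSeq ρ' x).length ≤ Fintype.card M.Q) ∧
      {s : List (M.Q × Bool) | s ≠ [] ∧ ∃ x : ℕ, visitSeq ρ' x = s}.ncard ≤
        ∑ i ∈ Finset.Icc 1 (Fintype.card M.Q), (2 * Fintype.card M.Q) ^ i) := by
  refine ⟨my_shrink M w ρ hρ, my_exists_nodup M w ρ.length ρ le_rfl hρ, ?_⟩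
  intro ρ' _ hnd
  exact ⟨my_visitSeq_len ρ' hnd, my_ncard_bound ρ' (my_visitSeq_len ρ' hnd)⟩
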